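/- For every polynomial P ∈ ℚ[t] that preserves formal sums of signs, there exist a polynomial Q ∈ ℤ[t] and a polynomial R ∈ ℚ[t] preserving formal sums of signs such that R(m) is divisible by 4 for every integer m and P = Q + R. -/

import Mathlib

open Polynomial

/-- A polynomial `P ∈ ℚ[t]` preserves formal sums of signs if for every `s ≥ 0` there is
a polynomial `Q` with integer coefficients in `s` variables such that
`P(X_1 + ⋯ + X_s) − Q` lies in the ideal generated by the `X_i^3 − X_i`. -/
def PreservesSumsOfSigns (P : Polynomial ℚ) : Prop :=
  ∀ s : ℕ, ∃ Q : MvPolynomial (Fin s) ℤ,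
    Polynomial.aeval (∑ i : Fin s, MvPolynomial.X i) P
        - MvPolynomial.map (Int.castRingHom ℚ) Q ∈
      Ideal.span (Set.range fun i : Fin s => MvPolynomial.X i ^ 3 - MvPolynomial.X i)

noncomputable def sh (a : ℚ) (P : ℚ[X]) : ℚ[X] := P.comp (X + C a)
noncomputable def D1 (P : ℚ[X]) : ℚ[X] := (2⁻¹ : ℚ) • (sh 1 P - sh (-1) P)
noncomputable def D2 (P : ℚ[X]) : ℚ[X] := (2⁻¹ : ℚ) • (sh 1 P + sh (-1) P) - P
noncomputable def Dl (P : ℚ[X]) : ℚ[X] := sh 1 P - P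

lemma sh_sh (a b : ℚ) (P : ℚ[X]) : sh a (sh b P) = sh (a + b) P := by
  simp only [sh, comp_assoc, add_comp, X_comp, C_comp, add_assoc, ← C_add]

lemma sh_add (a : ℚ) (P Q : ℚ[X]) : sh a (P + Q) = sh a P + sh a Q := by
  simp [sh, add_comp]

lemma sh_sub (a : ℚ) (P Q : ℚ[X]) : sh a (P - Q) = sh a P - sh a Q := by
  simp [sh, sub_comp]

lemma sh_smul (a : ℚ) (c : ℚ) (P : ℚ[X]) : sh a (c • P) = c • sh a P := by
  simp [sh, smul_comp]

lemma sh_zero (P : ℚ[X]) : sh 0 P = P := by simp [sh]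

lemma sh_eval (a : ℚ) (P : ℚ[X]) (t : ℚ) : (sh a P).eval t = P.eval (t + a) := by
  simp [sh]

lemma D1_add (P Q : ℚ[X]) : D1 (P + Q) = D1 P + D1 Q := by
  simp only [D1, sh_add]; module

lemma D2_add (P Q : ℚ[X]) : D2 (P + Q) = D2 P + D2 Q := by
  simp only [D2, sh_add]; module

lemma Dl_add (P Q : ℚ[X]) : Dl (P + Q) = Dl P + Dl Q := by
  simp only [Dl, sh_add]; module

lemma D1_smul (c : ℚ) (P : ℚ[X]) : D1 (c • P) = c • D1 P := by
  simp only [D1, sh_smul]; module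

lemma D2_smul (c : ℚ) (P : ℚ[X]) : D2 (c • P) = c • D2 P := by
  simp only [D2, sh_smul]; module

lemma Dl_smul (c : ℚ) (P : ℚ[X]) : Dl (c • P) = c • Dl P := by
  simp only [Dl, sh_smul]; module

lemma Dl_sub (P Q : ℚ[X]) : Dl (P - Q) = Dl P - Dl Q := by
  simp only [Dl, sh_sub]; module

lemma Dl_eq (P : ℚ[X]) : Dl P = D1 P + D2 P := by
  simp only [Dl, D1, D2]; module

lemma D1_sh (a : ℚ) (P : ℚ[X]) : D1 (sh a P) = sh a (D1 P) := by
  simp only [D1, sh_smul, sh_sub, sh_sh]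
  rw [add_comm a 1, add_comm a (-1)]

lemma D2_sh (a : ℚ) (P : ℚ[X]) : D2 (sh a P) = sh a (D2 P) := by
  simp only [D2, sh_smul, sh_sub, sh_add, sh_sh]
  rw [add_comm a 1, add_comm a (-1)]

-- I2 : commutativity
lemma D1_D2 (P : ℚ[X]) : D1 (D2 P) = D2 (D1 P) := by
  simp only [D1, D2, sh_smul, sh_sub, sh_add, sh_sh, smul_sub, smul_add]
  norm_num [sh_zero]
  module

-- I1 : D1 ∘ D1 = D2 ∘ D2 + 2 D2
lemma D1_D1 (P : ℚ[X]) : D1 (D1 P) = D2 (D2 P) + (2:ℚ) • D2 P := by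
  simp only [D1, D2, sh_smul, sh_sub, sh_add, sh_sh, smul_sub, smul_add]
  norm_num [sh_zero]
  module

noncomputable def Uop (P : ℚ[X]) : ℚ[X] := D2 (D2 P) + D2 P + D1 (D2 P)

-- KEY2 : Δ² = 2 U
lemma Dl_Dl (P : ℚ[X]) : Dl (Dl P) = (2:ℚ) • Uop P := by
  simp only [Dl, Uop, D1, D2, sh_smul, sh_sub, sh_add, sh_sh, smul_sub, smul_add]
  norm_num [sh_zero]
  module
def IsInt (q : ℚ) : Prop := ∃ n : ℤ, q = (n : ℚ)

lemma IsInt.add {a b : ℚ} (ha : IsInt a) (hb : IsInt b) : IsInt (a + b) := by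
  obtain ⟨m, rfl⟩ := ha; obtain ⟨n, rfl⟩ := hb; exact ⟨m + n, by push_cast; ring⟩

lemma IsInt.mul {a b : ℚ} (ha : IsInt a) (hb : IsInt b) : IsInt (a * b) := by
  obtain ⟨m, rfl⟩ := ha; obtain ⟨n, rfl⟩ := hb; exact ⟨m * n, by push_cast; ring⟩

lemma isInt_intCast (n : ℤ) : IsInt (n : ℚ) := ⟨n, rfl⟩

def Good (P : ℚ[X]) : Prop := ∀ j k : ℕ, IsInt ((D1^[j] (D2^[k] P)).eval 0)

lemma D2_iter_D1 (k : ℕ) (P : ℚ[X]) : D2^[k] (D1 P) = D1 (D2^[k] P) := by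
  induction k generalizing P with
  | zero => simp
  | succ k ih =>
    simp only [Function.iterate_succ_apply]
    rw [← D1_D2, ih]

lemma goodD2 {P : ℚ[X]} (h : Good P) : Good (D2 P) := by
  intro j k
  rw [← Function.iterate_succ_apply D2 k P]
  exact h j (k + 1)

lemma goodD1 {P : ℚ[X]} (h : Good P) : Good (D1 P) := by
  intro j k
  rw [D2_iter_D1, ← Function.iterate_succ_apply D1 j]
  exact h (j + 1) k

lemma iter_D2_add (k : ℕ) (P Q : ℚ[X]) : D2^[k] (P + Q) = D2^[k] P + D2^[k] Q := by
  induction k generalizing P Q with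
  | zero => simp
  | succ k ih => simp only [Function.iterate_succ_apply, D2_add, ih]

lemma iter_D1_add (j : ℕ) (P Q : ℚ[X]) : D1^[j] (P + Q) = D1^[j] P + D1^[j] Q := by
  induction j generalizing P Q with
  | zero => simp
  | succ j ih => simp only [Function.iterate_succ_apply, D1_add, ih]

lemma goodAdd {P Q : ℚ[X]} (hP : Good P) (hQ : Good Q) : Good (P + Q) := by
  intro j k
  rw [iter_D2_add, iter_D1_add, Polynomial.eval_add]
  exact (hP j k).add (hQ j k)

lemma goodDl {P : ℚ[X]} (h : Good P) : Good (Dl P) := by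
  rw [Dl_eq]; exact goodAdd (goodD1 h) (goodD2 h)

lemma goodDlIter {P : ℚ[X]} (h : Good P) (n : ℕ) : Good (Dl^[n] P) := by
  induction n with
  | zero => exact h
  | succ n ih => rw [Function.iterate_succ_apply']; exact goodDl ih

lemma goodUop {P : ℚ[X]} (h : Good P) : Good (Uop P) :=
  goodAdd (goodAdd (goodD2 (goodD2 h)) (goodD2 h)) (goodD1 (goodD2 h))

lemma iter_Dl_smul (n : ℕ) (c : ℚ) (P : ℚ[X]) : Dl^[n] (c • P) = c • Dl^[n] P := by
  induction n generalizing P with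
  | zero => simp
  | succ n ih => simp only [Function.iterate_succ_apply, Dl_smul, ih]

lemma iter_Dl_sub (n : ℕ) (P Q : ℚ[X]) : Dl^[n] (P - Q) = Dl^[n] P - Dl^[n] Q := by
  induction n generalizing P Q with
  | zero => simp
  | succ n ih => simp only [Function.iterate_succ_apply, Dl_sub, ih]

lemma Dl_two (P : ℚ[X]) : Dl^[2] P = (2:ℚ) • Uop P := by
  rw [show (2:ℕ) = 1 + 1 from rfl, Function.iterate_add_apply]
  simpa using Dl_Dl P

-- evenness / divisibility facts
lemma Dl2_eval (P : ℚ[X]) (hP : Good P) : ∃ u : ℤ, (Dl^[2] P).eval 0 = ((2 * u : ℤ) : ℚ) := by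
  obtain ⟨u, hu⟩ := goodUop hP 0 0
  refine ⟨u, ?_⟩
  rw [Dl_two, Polynomial.eval_smul]
  simp only [Function.iterate_zero_apply] at hu
  rw [hu, smul_eq_mul]; push_cast; ring

lemma Dl3_eval (P : ℚ[X]) (hP : Good P) : ∃ v : ℤ, (Dl^[3] P).eval 0 = ((2 * v : ℤ) : ℚ) := by
  have h3 : Dl^[3] P = (2:ℚ) • Dl (Uop P) := by
    rw [show (3:ℕ) = 1 + 2 from rfl, Function.iterate_add_apply, Dl_two]
    simpa using Dl_smul 2 (Uop P)
  obtain ⟨v, hv⟩ := goodDl (goodUop hP) 0 0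
  refine ⟨v, ?_⟩
  rw [h3, Polynomial.eval_smul]
  simp only [Function.iterate_zero_apply] at hv
  rw [hv, smul_eq_mul]; push_cast; ring

lemma Dl4_eval (P : ℚ[X]) (hP : Good P) (n : ℕ) :
    ∃ w : ℤ, (Dl^[n + 4] P).eval 0 = ((4 * w : ℤ) : ℚ) := by
  have h4 : Dl^[4] P = (4:ℚ) • Uop (Uop P) := by
    have h24 : Dl^[4] P = Dl^[2] (Dl^[2] P) := by
      rw [← Function.iterate_add_apply]
    rw [h24, Dl_two P, iter_Dl_smul, Dl_two, smul_smul]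
    norm_num
  obtain ⟨w, hw⟩ := goodDlIter (goodUop (goodUop hP)) n 0 0
  refine ⟨w, ?_⟩
  rw [Function.iterate_add_apply, h4, iter_Dl_smul, Polynomial.eval_smul]
  simp only [Function.iterate_zero_apply] at hw
  rw [hw, smul_eq_mul]; push_cast; ring
def vv : Fin 3 → ℚ := fun c => if c = 0 then 0 else if c = 1 then 1 else -1
def w1 : Fin 3 → ℚ := fun c => if c = 0 then 0 else if c = 1 then 2⁻¹ else -2⁻¹
def w2 : Fin 3 → ℚ := fun c => if c = 0 then -1 else if c = 1 then 2⁻¹ else 2⁻¹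

def Wt (j i : ℕ) : Fin 3 → ℚ := if i < j then w1 else w2

lemma Wt_succ (j i : ℕ) : Wt (j + 1) (i + 1) = Wt j i := by
  simp [Wt, Nat.succ_lt_succ_iff]

lemma Wt_zero (i : ℕ) : Wt 0 i = w2 := by simp [Wt]

lemma Wt_pos_zero (j : ℕ) : Wt (j + 1) 0 = w1 := by simp [Wt]

lemma evD1 (R : ℚ[X]) : (D1 R).eval 0 = 2⁻¹ * (R.eval 1 - R.eval (-1)) := by
  simp [D1, sh_eval, smul_eq_mul]

lemma evD2 (R : ℚ[X]) : (D2 R).eval 0 = 2⁻¹ * (R.eval 1 + R.eval (-1)) - R.eval 0 := by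
  simp [D2, sh_eval, smul_eq_mul]
  ring

lemma shD2_iter (a : ℚ) (k : ℕ) : ∀ R : ℚ[X], D2^[k] (sh a R) = sh a (D2^[k] R) := by
  induction k with
  | zero => simp
  | succ k ih => intro R; simp only [Function.iterate_succ_apply, D2_sh, ih]

lemma shD1_iter (a : ℚ) (j : ℕ) : ∀ R : ℚ[X], D1^[j] (sh a R) = sh a (D1^[j] R) := by
  induction j with
  | zero => simp
  | succ j ih => intro R; simp only [Function.iterate_succ_apply, D1_sh, ih]

lemma sh_iter (a : ℚ) (j k : ℕ) (P : ℚ[X]) :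
    D1^[j] (D2^[k] (sh a P)) = sh a (D1^[j] (D2^[k] P)) := by
  rw [shD2_iter, shD1_iter]

noncomputable def Big (n j : ℕ) (P : ℚ[X]) : ℚ :=
  ∑ x : Fin n → Fin 3, (∏ i : Fin n, Wt j (i : ℕ) (x i)) * P.eval (∑ i : Fin n, vv (x i))

lemma big_peel (n j : ℕ) (P : ℚ[X]) :
    Big (n+1) j P = ∑ c : Fin 3, Wt j 0 c *
      ∑ y : Fin n → Fin 3,
        (∏ i : Fin n, Wt j ((i : ℕ) + 1) (y i)) * (sh (vv c) P).eval (∑ i : Fin n, vv (y i)) := by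
  have hsum : Big (n+1) j P = ∑ p : Fin 3 × (Fin n → Fin 3),
      (∏ i : Fin (n+1), Wt j (i : ℕ) (Fin.cons (α := fun _ => Fin 3) p.1 p.2 i)) *
        P.eval (∑ i : Fin (n+1), vv (Fin.cons (α := fun _ => Fin 3) p.1 p.2 i)) := by
    rw [Big]
    exact (Fintype.sum_equiv (Fin.consEquiv (fun _ : Fin (n+1) => Fin 3)) _ _
      (fun p => rfl)).symm
  rw [hsum, Fintype.sum_prod_type]
  refine Finset.sum_congr rfl (fun c _ => ?_)
  rw [Finset.mul_sum]
  refine Finset.sum_congr rfl (fun y _ => ?_)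
  rw [Fin.prod_univ_succ, Fin.sum_univ_succ]
  simp only [Fin.cons_zero, Fin.cons_succ, Fin.val_succ, Fin.val_zero]
  rw [sh_eval]
  ring_nf

lemma big_eq : ∀ n j k : ℕ, j + k = n → ∀ P : ℚ[X],
    Big n j P = (D1^[j] (D2^[k] P)).eval 0 := by
  intro n
  induction n with
  | zero =>
    intro j k hjk P
    obtain ⟨rfl, rfl⟩ : j = 0 ∧ k = 0 := by omega
    simp [Big]
  | succ n ih =>
    intro j k hjk P
    cases j with
    | zero =>
      have hk : k = n + 1 := by omega
      subst hk
      rw [big_peel]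
      have hin : ∀ c : Fin 3,
          (∑ y : Fin n → Fin 3,
            (∏ i : Fin n, Wt 0 ((i : ℕ) + 1) (y i)) *
              (sh (vv c) P).eval (∑ i : Fin n, vv (y i)))
          = (D2^[n] P).eval (vv c) := by
        intro c
        have h1 : (∑ y : Fin n → Fin 3,
            (∏ i : Fin n, Wt 0 ((i : ℕ) + 1) (y i)) *
              (sh (vv c) P).eval (∑ i : Fin n, vv (y i))) = Big n 0 (sh (vv c) P) := by
          rw [Big]
          refine Finset.sum_congr rfl (fun y _ => ?_)
          congr 1
        rw [h1, ih 0 n (Nat.zero_add n), Function.iterate_zero_apply, shD2_iter, sh_eval, zero_add]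
      simp only [hin]
      rw [Function.iterate_zero_apply, Function.iterate_succ_apply', evD2,
        Fin.sum_univ_three]
      have e0 : vv 0 = 0 := rfl
      have e1 : vv 1 = 1 := rfl
      have e2 : vv 2 = -1 := rfl
      have f0 : w2 0 = -1 := rfl
      have f1 : w2 1 = 2⁻¹ := rfl
      have f2 : w2 2 = 2⁻¹ := rfl
      rw [Wt_zero, e0, e1, e2, f0, f1, f2]
      ring
    | succ j' =>
      have hk : j' + k = n := by omega
      rw [big_peel]
      have hin : ∀ c : Fin 3,
          (∑ y : Fin n → Fin 3,
            (∏ i : Fin n, Wt (j' + 1) ((i : ℕ) + 1) (y i)) *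
              (sh (vv c) P).eval (∑ i : Fin n, vv (y i)))
          = (D1^[j'] (D2^[k] P)).eval (vv c) := by
        intro c
        have h1 : (∑ y : Fin n → Fin 3,
            (∏ i : Fin n, Wt (j' + 1) ((i : ℕ) + 1) (y i)) *
              (sh (vv c) P).eval (∑ i : Fin n, vv (y i))) = Big n j' (sh (vv c) P) := by
          rw [Big]
          refine Finset.sum_congr rfl (fun y _ => ?_)
          congr 1
          exact Finset.prod_congr rfl (fun i _ => by rw [Wt_succ])
        rw [h1, ih j' k hk, sh_iter, sh_eval, zero_add]
      simp only [hin]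
      rw [Function.iterate_succ_apply', evD1, Fin.sum_univ_three]
      have e1 : vv 1 = 1 := rfl
      have e2 : vv 2 = -1 := rfl
      have f0 : w1 0 = 0 := rfl
      have f1 : w1 1 = 2⁻¹ := rfl
      have f2 : w1 2 = -2⁻¹ := rfl
      rw [Wt_pos_zero, e1, e2, f0, f1, f2]
      ring
lemma vv_cube (c : Fin 3) : vv c ^ 3 - vv c = 0 := by
  fin_cases c <;> norm_num [vv]

lemma wfac_isInt (jj i r : ℕ) : IsInt (∑ c : Fin 3, Wt jj i c * vv c ^ r) := by
  rw [Fin.sum_univ_three]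
  by_cases h : i < jj
  · simp only [Wt, if_pos h]
    have f0 : w1 0 = 0 := rfl
    have f1 : w1 1 = 2⁻¹ := rfl
    have f2 : w1 2 = -2⁻¹ := rfl
    have e0 : vv 0 = 0 := rfl
    have e1 : vv 1 = 1 := rfl
    have e2 : vv 2 = -1 := rfl
    rw [f0, f1, f2, e0, e1, e2]
    rcases Nat.even_or_odd r with hr | hr
    · exact ⟨0, by rw [hr.neg_one_pow]; push_cast; ring⟩
    · exact ⟨1, by rw [hr.neg_one_pow]; push_cast; ring⟩
  · simp only [Wt, if_neg h]
    have f0 : w2 0 = -1 := rfl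
    have f1 : w2 1 = 2⁻¹ := rfl
    have f2 : w2 2 = 2⁻¹ := rfl
    have e0 : vv 0 = 0 := rfl
    have e1 : vv 1 = 1 := rfl
    have e2 : vv 2 = -1 := rfl
    rw [f0, f1, f2, e0, e1, e2]
    cases r with
    | zero => exact ⟨0, by norm_num⟩
    | succ m =>
      rcases Nat.even_or_odd (m + 1) with hr | hr
      · exact ⟨1, by rw [hr.neg_one_pow]; push_cast; norm_num⟩
      · exact ⟨0, by rw [hr.neg_one_pow]; push_cast; norm_num⟩

lemma good_of_preserves (P : ℚ[X]) (hP : PreservesSumsOfSigns P) : Good P := by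
  intro j k
  obtain ⟨Q, hQ⟩ := hP (j + k)
  -- evaluation kills the ideal element
  have hev : ∀ x : Fin (j + k) → Fin 3,
      MvPolynomial.eval (fun i => vv (x i))
        (Polynomial.aeval (∑ i : Fin (j + k), MvPolynomial.X i) P
          - MvPolynomial.map (Int.castRingHom ℚ) Q) = 0 := by
    intro x
    have hker : Ideal.span (Set.range fun i : Fin (j + k) =>
        MvPolynomial.X i ^ 3 - MvPolynomial.X i (R := ℚ))
        ≤ RingHom.ker (MvPolynomial.eval (fun i => vv (x i))) := by
      rw [Ideal.span_le]
      rintro _ ⟨i, rfl⟩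
      simp only [SetLike.mem_coe, RingHom.mem_ker, map_sub, map_pow, MvPolynomial.eval_X]
      exact vv_cube (x i)
    exact hker hQ
  -- hence the two weighted sums agree
  have hsums :
      (∑ x : Fin (j + k) → Fin 3, (∏ i : Fin (j + k), Wt j (i : ℕ) (x i)) *
        MvPolynomial.eval (fun i => vv (x i))
          (Polynomial.aeval (∑ i : Fin (j + k), MvPolynomial.X i) P))
      = ∑ x : Fin (j + k) → Fin 3, (∏ i : Fin (j + k), Wt j (i : ℕ) (x i)) *
          MvPolynomial.eval (fun i => vv (x i))
            (MvPolynomial.map (Int.castRingHom ℚ) Q) := by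
    refine Finset.sum_congr rfl (fun x _ => ?_)
    have := hev x
    rw [map_sub] at this
    have h2 : MvPolynomial.eval (fun i => vv (x i))
        (Polynomial.aeval (∑ i : Fin (j + k), MvPolynomial.X i) P)
        = MvPolynomial.eval (fun i => vv (x i))
          (MvPolynomial.map (Int.castRingHom ℚ) Q) := by linarith [this]
    rw [h2]
  -- LHS is the Big sum
  have hL : (∑ x : Fin (j + k) → Fin 3, (∏ i : Fin (j + k), Wt j (i : ℕ) (x i)) *
      MvPolynomial.eval (fun i => vv (x i))
        (Polynomial.aeval (∑ i : Fin (j + k), MvPolynomial.X i) P)) = Big (j + k) j P := by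
    rw [Big]
    refine Finset.sum_congr rfl (fun x _ => ?_)
    congr 1
    rw [Polynomial.aeval_def, Polynomial.hom_eval₂]
    have hcomp : (MvPolynomial.eval (fun i => vv (x i))).comp
        (algebraMap ℚ (MvPolynomial (Fin (j + k)) ℚ)) = RingHom.id ℚ :=
      Subsingleton.elim _ _
    rw [hcomp]
    have hpt : MvPolynomial.eval (fun i => vv (x i)) (∑ i : Fin (j + k), MvPolynomial.X i)
        = ∑ i : Fin (j + k), vv (x i) := by
      rw [map_sum]
      simp
    rw [hpt]
    simpa using Polynomial.eval₂_at_apply (RingHom.id ℚ) (∑ i : Fin (j + k), vv (x i)) (p := P)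
  -- RHS is an integer
  have hR : IsInt (∑ x : Fin (j + k) → Fin 3, (∏ i : Fin (j + k), Wt j (i : ℕ) (x i)) *
      MvPolynomial.eval (fun i => vv (x i))
        (MvPolynomial.map (Int.castRingHom ℚ) Q)) := by
    have hev2 : ∀ x : Fin (j + k) → Fin 3,
        MvPolynomial.eval (fun i => vv (x i)) (MvPolynomial.map (Int.castRingHom ℚ) Q)
        = ∑ d ∈ Q.support, (((MvPolynomial.coeff d Q : ℤ) : ℚ)) * ∏ i : Fin (j + k), vv (x i) ^ d i := by
      intro x
      rw [MvPolynomial.eval_map, MvPolynomial.eval₂_eq']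
      rfl
    simp only [hev2]
    simp only [Finset.mul_sum]
    rw [Finset.sum_comm]
    have hd : ∀ d : Fin (j + k) →₀ ℕ, d ∈ Q.support →
        IsInt (∑ x : Fin (j + k) → Fin 3, (∏ i : Fin (j + k), Wt j (i : ℕ) (x i)) *
          (((MvPolynomial.coeff d Q : ℤ) : ℚ) * ∏ i : Fin (j + k), vv (x i) ^ d i)) := by
      intro d _
      have hx : ∀ x : Fin (j + k) → Fin 3,
          (∏ i : Fin (j + k), Wt j (i : ℕ) (x i)) * (((MvPolynomial.coeff d Q : ℤ) : ℚ) * ∏ i : Fin (j + k), vv (x i) ^ d i)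
          = ((MvPolynomial.coeff d Q : ℤ) : ℚ) * ∏ i : Fin (j + k), (Wt j (i : ℕ) (x i) * vv (x i) ^ d i) := by
        intro x
        rw [Finset.prod_mul_distrib]
        ring
      simp only [hx]
      rw [← Finset.mul_sum]
      refine (isInt_intCast _).mul ?_
      rw [← Fintype.piFinset_univ,
        ← Finset.prod_univ_sum (fun _ : Fin (j + k) => (Finset.univ : Finset (Fin 3)))
          (fun i c => Wt j (i : ℕ) c * vv c ^ d i)]
      refine Finset.prod_induction _ IsInt ?_ ⟨1, by norm_num⟩ ?_
      · exact fun _ _ ha hb => ha.mul hb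
      · intro i _
        exact wfac_isInt j (i : ℕ) (d i)
    refine Finset.sum_induction _ IsInt ?_ ⟨0, by norm_num⟩ hd
    exact fun _ _ ha hb => ha.add hb
  rw [hL, big_eq (j + k) j k rfl P] at hsums
  rw [hsums]
  exact hR
lemma Dl_zero_poly : Dl 0 = 0 := by simp [Dl, sh]

lemma iter_Dl_zero (n : ℕ) : Dl^[n] (0 : ℚ[X]) = 0 := by
  induction n with
  | zero => rfl
  | succ n ih => rw [Function.iterate_succ_apply, Dl_zero_poly, ih]

lemma natDegree_sh (a : ℚ) (R : ℚ[X]) : (sh a R).natDegree = R.natDegree := by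
  rw [sh, ← taylor_apply, natDegree_taylor]

lemma sh_ne_zero (a : ℚ) (R : ℚ[X]) (h : R ≠ 0) : sh a R ≠ 0 := by
  intro h0
  apply h
  have := congrArg (sh (-a)) h0
  rw [sh_sh] at this
  simpa [sh_zero, Dl_zero_poly, sh, zero_comp] using this

lemma degstep (R : ℚ[X]) (d : ℕ) (h : R.natDegree ≤ d + 1) : (Dl R).natDegree ≤ d := by
  by_cases hR : R = 0
  · subst hR; simp [Dl_zero_poly]
  by_cases hDl : Dl R = 0
  · simp [hDl]
  have hsh : sh 1 R ≠ 0 := sh_ne_zero 1 R hR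
  have hdeg : (sh 1 R).degree = R.degree := by
    rw [degree_eq_natDegree hsh, degree_eq_natDegree hR, natDegree_sh]
  have hlc : (sh 1 R).leadingCoeff = R.leadingCoeff := by
    rw [sh]
    rw [leadingCoeff_comp (by rw [natDegree_X_add_C]; norm_num)]
    rw [(monic_X_add_C (1:ℚ)).leadingCoeff, one_pow, mul_one]
  have hlt : (Dl R).degree < R.degree := by
    rw [Dl, ← hdeg]
    exact degree_sub_lt hdeg hsh hlc
  have := natDegree_lt_natDegree hDl hlt
  omega

lemma iter_vanish : ∀ d : ℕ, ∀ R : ℚ[X], R.natDegree ≤ d → Dl^[d + 1] R = 0 := by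
  intro d
  induction d with
  | zero =>
    intro R hR
    have := eq_C_of_natDegree_le_zero hR
    rw [Function.iterate_one, this]
    simp [Dl, sh]
  | succ d ih =>
    intro R hR
    rw [Function.iterate_succ_apply]
    exact ih (Dl R) (degstep R d hR)

lemma iter_vanish_ge (R : ℚ[X]) (d n : ℕ) (hR : R.natDegree ≤ d) (hn : d + 1 ≤ n) :
    Dl^[n] R = 0 := by
  obtain ⟨m, rfl⟩ : ∃ m, n = m + (d + 1) := ⟨n - (d+1), by omega⟩
  rw [Function.iterate_add_apply, iter_vanish d R hR, iter_Dl_zero]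

lemma evDl (S : ℚ[X]) (t : ℚ) : (Dl S).eval t = S.eval (t + 1) - S.eval t := by
  simp [Dl, sh_eval]

def IsFour (q : ℚ) : Prop := ∃ c : ℤ, q = ((4 * c : ℤ) : ℚ)

lemma IsFour.add {a b : ℚ} (ha : IsFour a) (hb : IsFour b) : IsFour (a + b) := by
  obtain ⟨m, rfl⟩ := ha; obtain ⟨n, rfl⟩ := hb; exact ⟨m + n, by push_cast; ring⟩

lemma IsFour.sub {a b : ℚ} (ha : IsFour a) (hb : IsFour b) : IsFour (a - b) := by
  obtain ⟨m, rfl⟩ := ha; obtain ⟨n, rfl⟩ := hb; exact ⟨m - n, by push_cast; ring⟩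

lemma endgame (R : ℚ[X]) (H : ∀ n : ℕ, IsFour ((Dl^[n] R).eval 0)) :
    ∀ m : ℤ, IsFour (R.eval (m : ℚ)) := by
  have step : ∀ (n : ℕ) (t : ℚ), (Dl^[n] R).eval (t + 1)
      = (Dl^[n] R).eval t + (Dl^[n+1] R).eval t := by
    intro n t
    have := evDl (Dl^[n] R) t
    rw [← Function.iterate_succ_apply' Dl n R] at this
    linarith [this]
  -- forward
  have F : ∀ m : ℕ, ∀ n : ℕ, IsFour ((Dl^[n] R).eval (m : ℚ)) := by
    intro m
    induction m with
    | zero => intro n; simpa using H n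
    | succ m ih =>
      intro n
      have : ((m : ℚ) + 1) = ((m + 1 : ℕ) : ℚ) := by push_cast; ring
      rw [← this, step n (m : ℚ)]
      exact (ih n).add (ih (n+1))
  -- backward
  set N := R.natDegree + 1 with hN
  have hvan : ∀ n : ℕ, N ≤ n → Dl^[n] R = 0 := fun n hn =>
    iter_vanish_ge R R.natDegree n le_rfl hn
  have B : ∀ m : ℕ, ∀ n : ℕ, IsFour ((Dl^[n] R).eval (-(m : ℚ))) := by
    intro m
    induction m with
    | zero => intro n; simpa using H n
    | succ m ih =>
      have inner : ∀ i : ℕ, ∀ n : ℕ, N ≤ n + i →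
          IsFour ((Dl^[n] R).eval (-((m+1 : ℕ) : ℚ))) := by
        intro i
        induction i with
        | zero =>
          intro n hn
          rw [hvan n (by omega)]
          exact ⟨0, by norm_num⟩
        | succ i ihi =>
          intro n hn
          have h1 : (Dl^[n] R).eval (-((m+1 : ℕ) : ℚ))
              = (Dl^[n] R).eval (-(m : ℚ)) - (Dl^[n+1] R).eval (-((m+1 : ℕ) : ℚ)) := by
            have := step n (-((m+1 : ℕ) : ℚ))
            have h2 : (-((m+1 : ℕ) : ℚ) + 1) = -(m : ℚ) := by push_cast; ring
            rw [h2] at this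
            linarith [this]
          rw [h1]
          exact (ih n).sub (ihi (n+1) (by omega))
      exact fun n => inner N n (by omega)
  intro m
  rcases le_or_gt 0 m with hm | hm
  · have : (m : ℚ) = ((m.toNat : ℕ) : ℚ) := by
      exact_mod_cast congrArg (Int.cast : ℤ → ℚ) (Int.toNat_of_nonneg hm).symm
    rw [this]
    exact F m.toNat 0
  · have hm' : m = -(m.natAbs : ℤ) := by omega
    have : (m : ℚ) = -((m.natAbs : ℕ) : ℚ) := by
      exact_mod_cast congrArg (Int.cast : ℤ → ℚ) hm'
    rw [this]
    exact B m.natAbs 0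
theorem preservesSumsOfSigns_decomp_mod_four (P : Polynomial ℚ)
    (hP : PreservesSumsOfSigns P) :
    ∃ (Q : Polynomial ℤ) (R : Polynomial ℚ),
      PreservesSumsOfSigns R ∧
      (∀ m : ℤ, ∃ k : ℤ, R.eval (m : ℚ) = ((4 * k : ℤ) : ℚ)) ∧
      P = Q.map (Int.castRingHom ℚ) + R := by
  have hG : Good P := good_of_preserves P hP
  obtain ⟨a0, ha0⟩ := hG 0 0
  simp only [Function.iterate_zero_apply] at ha0
  obtain ⟨c1, hc1⟩ := goodDl hG 0 0
  simp only [Function.iterate_zero_apply] at hc1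
  obtain ⟨u, hu⟩ := Dl2_eval P hG
  obtain ⟨v, hv⟩ := Dl3_eval P hG
  set Qz : Polynomial ℤ := C a0 + C (c1 - u) * X + C (u - v) * X ^ 2 + C v * X ^ 3 with hQz
  set Qq : ℚ[X] := Qz.map (Int.castRingHom ℚ) with hQqdef
  have hQq : Qq = C ((a0 : ℚ)) + C (((c1 - u : ℤ) : ℚ)) * X
      + C (((u - v : ℤ) : ℚ)) * X ^ 2 + C (((v : ℤ) : ℚ)) * X ^ 3 := by
    rw [hQqdef, hQz]
    simp [Polynomial.map_add, Polynomial.map_mul, Polynomial.map_pow,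
      Polynomial.map_C, Polynomial.map_X]
  have heval : ∀ t : ℚ, Qq.eval t
      = (a0 : ℚ) + ((c1 : ℚ) - u) * t + ((u : ℚ) - v) * t ^ 2 + (v : ℚ) * t ^ 3 := by
    intro t
    rw [hQq]
    simp only [eval_add, eval_mul, eval_pow, eval_C, eval_X]
    push_cast
    ring
  have hdeg : Qq.natDegree ≤ 3 := by
    rw [hQq]
    compute_degree
  set R : ℚ[X] := P - Qq with hRdef
  -- the four-divisibility of all iterated differences of R at 0
  have H0 : ∀ n : ℕ, IsFour ((Dl^[n] R).eval 0) := by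
    intro n
    have hsub : (Dl^[n] R).eval 0 = (Dl^[n] P).eval 0 - (Dl^[n] Qq).eval 0 := by
      rw [hRdef, iter_Dl_sub, eval_sub]
    by_cases hn : n ≤ 3
    · interval_cases n
      · refine ⟨0, ?_⟩
        simp only [Function.iterate_zero_apply] at hsub ⊢
        rw [hsub, ha0, heval 0]
        push_cast; ring
      · refine ⟨0, ?_⟩
        simp only [Function.iterate_one] at hsub ⊢
        have hDQ : (Dl Qq).eval 0 = (c1 : ℚ) := by
          rw [evDl, zero_add, heval 1, heval 0]
          push_cast; ring
        rw [hsub, hc1, hDQ]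
        push_cast; ring
      · refine ⟨-v, ?_⟩
        have h2 : ∀ S : ℚ[X], Dl^[2] S = Dl (Dl S) := by
          intro S
          rw [Function.iterate_succ_apply, Function.iterate_one]
        have hDQ : (Dl^[2] Qq).eval 0 = 2 * (u : ℚ) + 4 * (v : ℚ) := by
          rw [h2, evDl, evDl, evDl, zero_add]
          norm_num
          rw [heval 2, heval 1, heval 0]
          push_cast; ring
        rw [hsub, hu, hDQ]
        push_cast; ring
      · refine ⟨-v, ?_⟩
        have h3 : ∀ S : ℚ[X], Dl^[3] S = Dl (Dl (Dl S)) := by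
          intro S
          rw [show (3:ℕ) = 2 + 1 from rfl, Function.iterate_add_apply,
            Function.iterate_succ_apply, Function.iterate_one]
        have hDQ : (Dl^[3] Qq).eval 0 = 6 * (v : ℚ) := by
          rw [h3, evDl, evDl, evDl, evDl, evDl, evDl, evDl, zero_add]
          norm_num
          rw [heval 3, heval 2, heval 1, heval 0]
          push_cast; ring
        rw [hsub, hv, hDQ]
        push_cast; ring
    · obtain ⟨m, rfl⟩ : ∃ m, n = m + 4 := ⟨n - 4, by omega⟩
      obtain ⟨w, hw⟩ := Dl4_eval P hG m
      refine ⟨w, ?_⟩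
      rw [hsub, hw, iter_vanish_ge Qq 3 (m + 4) hdeg (by omega)]
      simp
  -- R preserves sums of signs
  have hPres : PreservesSumsOfSigns R := by
    intro s
    obtain ⟨Qs, hQs⟩ := hP s
    refine ⟨Qs - Polynomial.aeval (∑ i : Fin s, MvPolynomial.X i) Qz, ?_⟩
    have hMap : Polynomial.aeval (∑ i : Fin s, MvPolynomial.X i (R := ℚ)) Qq
        = MvPolynomial.map (Int.castRingHom ℚ)
            (Polynomial.aeval (∑ i : Fin s, MvPolynomial.X i (R := ℤ)) Qz) := by
      rw [hQqdef, ← algebraMap_int_eq, Polynomial.aeval_map_algebraMap]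
      rw [Polynomial.aeval_def, Polynomial.aeval_def, Polynomial.hom_eval₂]
      congr 1
      · exact RingHom.ext_int _ _
      · rw [map_sum]
        simp
    have hexpr : Polynomial.aeval (∑ i : Fin s, MvPolynomial.X i) R
        - MvPolynomial.map (Int.castRingHom ℚ)
            (Qs - Polynomial.aeval (∑ i : Fin s, MvPolynomial.X i) Qz)
        = Polynomial.aeval (∑ i : Fin s, MvPolynomial.X i) P
            - MvPolynomial.map (Int.castRingHom ℚ) Qs := by
      rw [hRdef, map_sub, map_sub, hMap]
      ring
    rw [hexpr]
    exact hQs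
  exact ⟨Qz, R, hPres, endgame R H0, by rw [hRdef]; ring⟩
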